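/- Suppose T ∈ L(H) is an absolutely continuous polynomially bounded operator with polynomial bound C_T, σ ⊂ 𝕋 is measurable, X ∈ L(H, L²(σ)) satisfies X T = U_σ X, where U_σ is multiplication by the independent variable on L²(σ). Let x ∈ H and suppose ψ ∈ L²(𝕋) satisfies ‖φ(T)x‖ ≤ K C_T ‖x‖ (∫_𝕋 |φ|²|ψ|² dm)^{1/2} for all φ ∈ H^∞. Set f = Xx ∈ L²(σ). Then |f| ≤ ‖X‖ K C_T ‖x‖ |ψ| a.e. on σ. -/

import Mathlib

open MeasureTheory Filter Topology

lemma hull_lintegral_le {Ω : Type*} [MeasurableSpace Ω] {μ : Measure Ω}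
    {τ S : Set Ω} (hτ : MeasurableSet τ) (hSτ : S ⊆ τ)
    (hμ : μ τ ≤ μ S) (hfin : μ τ ≠ ⊤)
    {v : Ω → ENNReal} {c : ENNReal} (hv : ∀ ζ ∈ S, v ζ ≤ c) :
    ∫⁻ ζ in τ, v ζ ∂μ ≤ c * μ τ := by
  rw [lintegral_def]
  refine iSup₂_le fun g hg => ?_
  set B := τ ∩ {ζ | c < g ζ} with hBdef
  have hBmeas : MeasurableSet B :=
    hτ.inter (g.measurable measurableSet_Ioi)
  have hB : μ B = 0 := by
    have hSB : S ⊆ τ \ B := by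
      intro ζ hζ
      refine ⟨hSτ hζ, fun hζB => ?_⟩
      exact absurd ((hg ζ).trans (hv ζ hζ)) (not_le.2 hζB.2)
    have h1 : μ (τ \ B) + μ B = μ τ := by
      rw [← measure_union Set.disjoint_sdiff_left hBmeas]
      congr 1
      rw [Set.diff_union_self, Set.union_eq_self_of_subset_right Set.inter_subset_left]
    have h3 : μ (τ \ B) ≠ ⊤ := ne_top_of_le_ne_top hfin (measure_mono Set.diff_subset)
    have h4 : μ (τ \ B) + μ B ≤ μ (τ \ B) + 0 := by
      rw [add_zero]; exact h1.le.trans (hμ.trans (measure_mono hSB))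
    exact le_antisymm ((ENNReal.add_le_add_iff_left h3).mp h4) zero_le
  have hae : ∀ᵐ ζ ∂μ.restrict τ, g ζ ≤ c := by
    refine (ae_restrict_iff' hτ).2 ?_
    rw [ae_iff]
    convert hB using 2
    ext ζ
    simp only [hBdef, Set.mem_setOf_eq, Set.mem_inter_iff, Classical.not_imp, not_le]
  calc g.lintegral (μ.restrict τ) = ∫⁻ ζ, g ζ ∂(μ.restrict τ) :=
        (g.lintegral_eq_lintegral _).symm
    _ ≤ ∫⁻ _, c ∂(μ.restrict τ) := lintegral_mono_ae hae
    _ = c * μ τ := by rw [lintegral_const, Measure.restrict_apply_univ]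

lemma key_ineq {H : Type*} [NormedAddCommGroup H] [InnerProductSpace ℂ H]
    {Ω : Type*} [MeasurableSpace Ω] (μ : Measure Ω) [IsProbabilityMeasure μ]
    (σ : Set Ω) (hσ : MeasurableSet σ)
    (Hinf : Set (Ω → ℂ)) (Φ : (Ω → ℂ) → H →L[ℂ] H)
    (hmod : ∀ τ : Set Ω, MeasurableSet τ → ∀ a b : ℝ, 0 < a → 0 < b →
      ∃ φ ∈ Hinf, (∀ᵐ ζ ∂μ, ζ ∈ τ → ‖φ ζ‖ = a) ∧ (∀ᵐ ζ ∂μ, ζ ∉ τ → ‖φ ζ‖ = b))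
    (K C : ℝ) (hK : 0 < K) (hC : 0 < C)
    (X : H →L[ℂ] Lp ℂ 2 (μ.restrict σ))
    (x : H) (ψ : Ω → ℂ)
    (hbound : ∀ φ ∈ Hinf,
      ‖(Φ φ) x‖ ≤ K * C * ‖x‖ * Real.sqrt (∫ ζ, ‖φ ζ‖ ^ 2 * ‖ψ ζ‖ ^ 2 ∂μ))
    (hint : ∀ φ ∈ Hinf,
      ⇑(X ((Φ φ) x)) =ᵐ[μ.restrict σ] fun ζ => φ ζ * ⇑(X x) ζ)
    (τ : Set Ω) (hτ : MeasurableSet τ) (hτσ : τ ⊆ σ) :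
    ∫⁻ ζ in τ, (‖⇑(X x) ζ‖₊ : ENNReal) ^ (2:ℝ) ∂μ ≤
      ENNReal.ofReal ((‖X‖ * K * C * ‖x‖)^2) *
        ∫⁻ ζ in τ, ENNReal.ofReal (‖ψ ζ‖^2) ∂μ := by
  set M := ‖X‖ * K * C * ‖x‖ with hMdef
  have hM0 : 0 ≤ M := by positivity
  set Q := ∫⁻ ζ in τ, ENNReal.ofReal (‖ψ ζ‖^2) ∂μ with hQdef
  set P := ∫⁻ ζ in τᶜ, ENNReal.ofReal (‖ψ ζ‖^2) ∂μ with hPdef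
  set LHS := ∫⁻ ζ in τ, (‖⇑(X x) ζ‖₊ : ENNReal) ^ (2:ℝ) ∂μ with hLHSdef
  -- main estimate, for every b > 0
  have main : ∀ b : ℝ, 0 < b →
      LHS ≤ ENNReal.ofReal (M^2 * (Q + ENNReal.ofReal (b^2) * P).toReal) := by
    intro b hb
    obtain ⟨φ, hφH, hφτ, hφc⟩ := hmod τ hτ 1 b one_pos hb
    set L := ∫⁻ ζ, ENNReal.ofReal (‖φ ζ‖^2 * ‖ψ ζ‖^2) ∂μ with hLdef
    have hL : L = Q + ENNReal.ofReal (b^2) * P := by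
      rw [hLdef, ← lintegral_add_compl (fun ζ => ENNReal.ofReal (‖φ ζ‖^2 * ‖ψ ζ‖^2)) hτ]
      congr 1
      · refine lintegral_congr_ae ?_
        filter_upwards [ae_restrict_of_ae hφτ, ae_restrict_mem hτ] with ζ h1 h2
        rw [h1 h2, one_pow, one_mul]
      · rw [← lintegral_const_mul' (ENNReal.ofReal (b^2)) _ ENNReal.ofReal_ne_top]
        refine lintegral_congr_ae ?_
        filter_upwards [ae_restrict_of_ae hφc, ae_restrict_mem hτ.compl] with ζ h1 h2
        rw [h1 h2, ← ENNReal.ofReal_mul (by positivity)]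
    -- the Bochner integral is dominated by the lintegral
    have hI : ∫ ζ, ‖φ ζ‖ ^ 2 * ‖ψ ζ‖ ^ 2 ∂μ ≤ L.toReal := by
      calc ∫ ζ, ‖φ ζ‖ ^ 2 * ‖ψ ζ‖ ^ 2 ∂μ
          ≤ ‖∫ ζ, ‖φ ζ‖ ^ 2 * ‖ψ ζ‖ ^ 2 ∂μ‖ := le_abs_self _
        _ ≤ (∫⁻ ζ, ENNReal.ofReal ‖‖φ ζ‖ ^ 2 * ‖ψ ζ‖ ^ 2‖ ∂μ).toReal :=
            norm_integral_le_lintegral_norm _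
        _ = L.toReal := by
            rw [hLdef]; congr 1; refine lintegral_congr fun ζ => ?_
            rw [Real.norm_of_nonneg (by positivity)]
    -- norm bound on X (Φ φ x)
    have hXle : eLpNorm (fun ζ => φ ζ * ⇑(X x) ζ) 2 (μ.restrict σ) ≤
        ENNReal.ofReal (M * Real.sqrt L.toReal) := by
      rw [← eLpNorm_congr_ae (hint φ hφH)]
      have heq : eLpNorm (⇑(X ((Φ φ) x))) 2 (μ.restrict σ) =
          ENNReal.ofReal ‖X ((Φ φ) x)‖ := by
        rw [Lp.norm_def, ENNReal.ofReal_toReal (Lp.eLpNorm_ne_top _)]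
      rw [heq]
      apply ENNReal.ofReal_le_ofReal
      calc ‖X ((Φ φ) x)‖ ≤ ‖X‖ * ‖(Φ φ) x‖ := X.le_opNorm _
        _ ≤ ‖X‖ * (K * C * ‖x‖ * Real.sqrt (∫ ζ, ‖φ ζ‖ ^ 2 * ‖ψ ζ‖ ^ 2 ∂μ)) :=
            mul_le_mul_of_nonneg_left (hbound φ hφH) (norm_nonneg X)
        _ = M * Real.sqrt (∫ ζ, ‖φ ζ‖ ^ 2 * ‖ψ ζ‖ ^ 2 ∂μ) := by rw [hMdef]; ring
        _ ≤ M * Real.sqrt L.toReal :=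
            mul_le_mul_of_nonneg_left (Real.sqrt_le_sqrt hI) hM0
    -- squaring
    have hsq : LHS ≤ (eLpNorm (fun ζ => φ ζ * ⇑(X x) ζ) 2 (μ.restrict σ)) ^ (2:ℝ) := by
      rw [eLpNorm_eq_lintegral_rpow_enorm_toReal two_ne_zero ENNReal.ofNat_ne_top,
        ← ENNReal.rpow_mul]
      simp only [ENNReal.toReal_ofNat, one_div]
      rw [show (2:ℝ)⁻¹ * 2 = 1 by norm_num, ENNReal.rpow_one]
      calc LHS = ∫⁻ ζ in τ, (‖φ ζ * ⇑(X x) ζ‖₊ : ENNReal) ^ (2:ℝ) ∂μ := by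
            refine lintegral_congr_ae ?_
            filter_upwards [ae_restrict_of_ae hφτ, ae_restrict_mem hτ] with ζ h1 h2
            rw [show ‖φ ζ * ⇑(X x) ζ‖₊ = ‖⇑(X x) ζ‖₊ from
              NNReal.eq (by rw [coe_nnnorm, coe_nnnorm, norm_mul, h1 h2, one_mul])]
        _ ≤ ∫⁻ ζ, (‖φ ζ * ⇑(X x) ζ‖₊ : ENNReal) ^ (2:ℝ) ∂(μ.restrict σ) := by
            refine lintegral_mono' ?_ le_rfl
            calc μ.restrict τ = (μ.restrict σ).restrict τ := by
                  rw [Measure.restrict_restrict hτ, Set.inter_eq_self_of_subset_left hτσ]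
              _ ≤ μ.restrict σ := Measure.restrict_le_self
    have hfin : LHS ≤ ENNReal.ofReal (M^2 * L.toReal) := by
      refine hsq.trans ?_
      calc (eLpNorm (fun ζ => φ ζ * ⇑(X x) ζ) 2 (μ.restrict σ)) ^ (2:ℝ)
          ≤ (ENNReal.ofReal (M * Real.sqrt L.toReal)) ^ (2:ℝ) :=
            ENNReal.rpow_le_rpow hXle (by norm_num)
        _ = ENNReal.ofReal ((M * Real.sqrt L.toReal) ^ (2:ℝ)) :=
            ENNReal.ofReal_rpow_of_nonneg (by positivity) (by norm_num)
        _ = ENNReal.ofReal (M^2 * L.toReal) := by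
            congr 1
            rw [show (2:ℝ) = ((2:ℕ):ℝ) by norm_num, Real.rpow_natCast, mul_pow,
              Real.sq_sqrt ENNReal.toReal_nonneg]
    rwa [hL] at hfin
  -- now conclude
  by_cases hM : M = 0
  · have h1 := main 1 one_pos
    rw [hM] at h1
    norm_num at h1
    exact h1.le.trans zero_le
  have hMpos : 0 < M := lt_of_le_of_ne hM0 (Ne.symm hM)
  by_cases hQ : Q = ⊤
  · rw [hQ, ENNReal.mul_top ((ENNReal.ofReal_pos.2 (by positivity)).ne')]
    exact le_top
  by_cases hP : P = ⊤
  · have h1 := main 1 one_pos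
    have h2 : Q + ENNReal.ofReal ((1:ℝ)^2) * P = ⊤ := by
      simp [hP]
    rw [h2] at h1
    norm_num at h1
    exact h1.le.trans zero_le
  -- P, Q finite, M > 0 : epsilon argument
  refine ENNReal.le_of_forall_pos_le_add fun ε hε _ => ?_
  set b := Real.sqrt (ε / (M^2 * (P.toReal + 1))) with hbdef
  have hb : 0 < b := Real.sqrt_pos.2 (by positivity)
  have hb2 : b^2 = ε / (M^2 * (P.toReal + 1)) := Real.sq_sqrt (by positivity)
  have hLfin : Q + ENNReal.ofReal (b^2) * P ≠ ⊤ :=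
    ENNReal.add_ne_top.2 ⟨hQ, ENNReal.mul_ne_top ENNReal.ofReal_ne_top hP⟩
  calc LHS ≤ ENNReal.ofReal (M^2 * (Q + ENNReal.ofReal (b^2) * P).toReal) := main b hb
    _ = ENNReal.ofReal (M^2) * ENNReal.ofReal ((Q + ENNReal.ofReal (b^2) * P).toReal) :=
        ENNReal.ofReal_mul (by positivity)
    _ = ENNReal.ofReal (M^2) * (Q + ENNReal.ofReal (b^2) * P) := by
        rw [ENNReal.ofReal_toReal hLfin]
    _ = ENNReal.ofReal (M^2) * Q + ENNReal.ofReal (M^2) * (ENNReal.ofReal (b^2) * P) := by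
        ring
    _ ≤ ENNReal.ofReal (M^2) * Q + ↑ε := by
        gcongr
        calc ENNReal.ofReal (M^2) * (ENNReal.ofReal (b^2) * P)
            = ENNReal.ofReal (M^2 * b^2) * ENNReal.ofReal P.toReal := by
              rw [ENNReal.ofReal_mul (by positivity), mul_assoc, ENNReal.ofReal_toReal hP]
          _ = ENNReal.ofReal (M^2 * b^2 * P.toReal) := by
              rw [← ENNReal.ofReal_mul (by positivity)]
          _ ≤ ENNReal.ofReal ε := by
              apply ENNReal.ofReal_le_ofReal
              rw [hb2, show M^2 * (↑ε / (M^2 * (P.toReal + 1))) * P.toReal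
                  = ↑ε * (P.toReal / (P.toReal + 1)) by field_simp]
              have h1 : P.toReal / (P.toReal + 1) ≤ 1 := by
                rw [div_le_one (by positivity)]; linarith [ENNReal.toReal_nonneg (a := P)]
              nlinarith [ε.coe_nonneg]
          _ = ↑ε := ENNReal.ofReal_coe_nnreal

/-- Lemma `lemfpsi`: `T` is an a.c. polynomially bounded operator
with polynomial bound `C`, abstracted via its `H^∞` calculus `Φ` on a probability
space `(Ω, μ)` (the circle); `Hinf` contains, for every measurable `τ` and
`a, b > 0`, a function of modulus `a` on `τ` and `b` off `τ`.
`X : H → L²(σ)` intertwines `T` with `U_σ`, so that `X(φ(T)x) = φ·(Xx)` a.e. on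
`σ` for `φ ∈ H^∞`.  If `‖φ(T)x‖ ≤ K C ‖x‖ (∫ |φ|²|ψ|² dm)^{1/2}` for all
`φ ∈ H^∞`, then `f = Xx` satisfies `|f| ≤ ‖X‖ K C ‖x‖ |ψ|` a.e. on `σ`. -/
theorem stmt_7 {H : Type*} [NormedAddCommGroup H] [InnerProductSpace ℂ H]
    {Ω : Type*} [MeasurableSpace Ω] (μ : Measure Ω) [IsProbabilityMeasure μ]
    (σ : Set Ω) (hσ : MeasurableSet σ)
    (Hinf : Set (Ω → ℂ)) (Φ : (Ω → ℂ) → H →L[ℂ] H)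
    (hmod : ∀ τ : Set Ω, MeasurableSet τ → ∀ a b : ℝ, 0 < a → 0 < b →
      ∃ φ ∈ Hinf, (∀ᵐ ζ ∂μ, ζ ∈ τ → ‖φ ζ‖ = a) ∧ (∀ᵐ ζ ∂μ, ζ ∉ τ → ‖φ ζ‖ = b))
    (K C : ℝ) (hK : 0 < K) (hC : 0 < C)
    (X : H →L[ℂ] Lp ℂ 2 (μ.restrict σ))
    (x : H) (ψ : Ω → ℂ)
    (hbound : ∀ φ ∈ Hinf,
      ‖(Φ φ) x‖ ≤ K * C * ‖x‖ * Real.sqrt (∫ ζ, ‖φ ζ‖ ^ 2 * ‖ψ ζ‖ ^ 2 ∂μ))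
    (hint : ∀ φ ∈ Hinf,
      ⇑(X ((Φ φ) x)) =ᵐ[μ.restrict σ] fun ζ => φ ζ * ⇑(X x) ζ) :
    ∀ᵐ ζ ∂(μ.restrict σ), ‖⇑(X x) ζ‖ ≤ ‖X‖ * K * C * ‖x‖ * ‖ψ ζ‖ := by
  have key := key_ineq μ σ hσ Hinf Φ hmod K C hK hC X x ψ hbound hint
  clear hmod hbound hint
  set M := ‖X‖ * K * C * ‖x‖ with hMdef
  have hM0 : 0 ≤ M := by positivity
  set f : Ω → ℂ := ⇑(X x) with hfdef
  have hfmeas : Measurable fun ζ => ‖f ζ‖ := (Lp.stronglyMeasurable (X x)).measurable.norm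
  have hconv : ∀ a : ℂ, (‖a‖₊ : ENNReal) ^ (2:ℝ) = ENNReal.ofReal (‖a‖^2) := fun a => by
    rw [← enorm_eq_nnnorm, ← ofReal_norm, ENNReal.ofReal_rpow_of_nonneg (norm_nonneg a) (by norm_num),
      show (2:ℝ) = ((2:ℕ):ℝ) by norm_num, Real.rpow_natCast]
  set δ : ℕ → ℝ := fun n => 1 / (3 * ((n:ℝ) + 1)) with hδdef
  have hδpos : ∀ n, 0 < δ n := fun n => by positivity
  set S : ℕ → ℕ → Set Ω := fun n k =>
    {ζ | M * ‖ψ ζ‖ + 3 * δ n ≤ ‖f ζ‖ ∧ (k:ℝ) * δ n ≤ ‖f ζ‖ ∧ ‖f ζ‖ < ((k:ℝ) + 1) * δ n}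
    with hSdef
  have hSnull : ∀ n k, (μ.restrict σ) (S n k) = 0 := by
    intro n k
    by_contra hne
    set A : Set Ω := {ζ | (k:ℝ) * δ n ≤ ‖f ζ‖ ∧ ‖f ζ‖ < ((k:ℝ) + 1) * δ n} with hAdef
    have hA : MeasurableSet A := by
      have : A = (fun ζ => ‖f ζ‖) ⁻¹' (Set.Ico ((k:ℝ) * δ n) (((k:ℝ) + 1) * δ n)) := rfl
      rw [this]
      exact hfmeas measurableSet_Ico
    set τ : Set Ω := toMeasurable (μ.restrict σ) (S n k) ∩ (A ∩ σ) with hτdef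
    have hτmeas : MeasurableSet τ :=
      (measurableSet_toMeasurable _ _).inter (hA.inter hσ)
    have hτσ : τ ⊆ σ := fun ζ hζ => hζ.2.2
    have hSA : S n k ⊆ A := fun ζ hζ => ⟨hζ.2.1, hζ.2.2⟩
    have hS'τ : S n k ∩ σ ⊆ τ := fun ζ hζ =>
      ⟨subset_toMeasurable _ _ hζ.1, hSA hζ.1, hζ.2⟩
    have hντ : (μ.restrict σ) τ = (μ.restrict σ) (S n k) := by
      rw [hτdef, Measure.measure_toMeasurable_inter_of_sFinite (hA.inter hσ) (S n k),
        Measure.restrict_apply' hσ, Measure.restrict_apply' hσ]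
      congr 1
      ext ζ
      simp only [Set.mem_inter_iff]
      exact ⟨fun h => ⟨h.1.1, h.2⟩, fun h => ⟨⟨h.1, hSA h.1, h.2⟩, h.2⟩⟩
    have hμτ : μ τ = (μ.restrict σ) (S n k) := by
      rw [← hντ, Measure.restrict_apply' hσ, Set.inter_eq_self_of_subset_left hτσ]
    have hμτ0 : μ τ ≠ 0 := by rw [hμτ]; exact hne
    have hμτtop : μ τ ≠ ⊤ := measure_ne_top μ τ
    have hμS : μ τ ≤ μ (S n k ∩ σ) := by
      rw [hμτ, Measure.restrict_apply' hσ]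
    -- pick a point of S n k ∩ σ to see that k ≥ 3
    have hSne : (S n k ∩ σ).Nonempty := by
      apply nonempty_of_measure_ne_zero (μ := μ)
      rw [← Measure.restrict_apply' hσ]
      exact hne
    obtain ⟨ζ₀, hζ₀S, _⟩ := hSne
    have hk3 : (3:ℝ) ≤ (k:ℝ) := by
      have h1 : 3 * δ n ≤ ‖f ζ₀‖ := by
        have := hζ₀S.1
        nlinarith [norm_nonneg (ψ ζ₀), hM0]
      have h2 : ‖f ζ₀‖ < ((k:ℝ) + 1) * δ n := hζ₀S.2.2
      have h3 : (2:ℝ) < (k:ℝ) := by nlinarith [hδpos n]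
      have h4 : (2:ℕ) < k := by exact_mod_cast h3
      exact_mod_cast h4
    -- lower bound for the lintegral of ‖f‖² over τ
    have hlow : ENNReal.ofReal (((k:ℝ) * δ n)^2) * μ τ ≤
        ∫⁻ ζ in τ, (‖f ζ‖₊ : ENNReal) ^ (2:ℝ) ∂μ := by
      rw [← setLIntegral_const τ (ENNReal.ofReal (((k:ℝ) * δ n)^2))]
      refine lintegral_mono_ae ?_
      filter_upwards [ae_restrict_mem hτmeas] with ζ hζ
      have hkδ : (k:ℝ) * δ n ≤ ‖f ζ‖ := hζ.2.1.1
      rw [hconv]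
      apply ENNReal.ofReal_le_ofReal
      have hkδ0 : 0 ≤ (k:ℝ) * δ n := by positivity
      nlinarith
    -- upper bound on ‖ψ‖² over S n k ∩ σ
    set c : ENNReal :=
      ENNReal.ofReal ((((k:ℝ) - 2) * δ n)^2) / ENNReal.ofReal (M^2) with hcdef
    have hc : ∀ ζ ∈ S n k ∩ σ, ENNReal.ofReal (‖ψ ζ‖^2) ≤ c := by
      intro ζ hζ
      have h1 : M * ‖ψ ζ‖ ≤ ((k:ℝ) - 2) * δ n := by
        have ha := hζ.1.1
        have hb := hζ.1.2.2
        nlinarith [hδpos n]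
      by_cases hM : M = 0
      · have hnum : 0 < (((k:ℝ) - 2) * δ n)^2 := by
          have h2 : 0 < ((k:ℝ) - 2) * δ n := mul_pos (by linarith) (hδpos n)
          positivity
        rw [hcdef, show ENNReal.ofReal (M^2) = 0 by simp [hM],
          ENNReal.div_zero ((ENNReal.ofReal_pos.2 hnum).ne')]
        exact le_top
      · have hMpos : 0 < M := lt_of_le_of_ne hM0 (Ne.symm hM)
        rw [hcdef, ENNReal.le_div_iff_mul_le
          (Or.inl (ENNReal.ofReal_pos.2 (by positivity)).ne') (Or.inl ENNReal.ofReal_ne_top),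
          ← ENNReal.ofReal_mul (by positivity)]
        apply ENNReal.ofReal_le_ofReal
        have h2 := mul_self_le_mul_self (mul_nonneg hM0 (norm_nonneg (ψ ζ))) h1
        nlinarith [h2]
    have hup : ∫⁻ ζ in τ, ENNReal.ofReal (‖ψ ζ‖^2) ∂μ ≤ c * μ τ :=
      hull_lintegral_le hτmeas hS'τ hμS hμτtop hc
    -- combine with the key inequality and derive a contradiction
    have hfinal : ENNReal.ofReal (((k:ℝ) * δ n)^2) * μ τ ≤
        ENNReal.ofReal ((((k:ℝ) - 2) * δ n)^2) * μ τ := by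
      calc ENNReal.ofReal (((k:ℝ) * δ n)^2) * μ τ
          ≤ ∫⁻ ζ in τ, (‖f ζ‖₊ : ENNReal) ^ (2:ℝ) ∂μ := hlow
        _ ≤ ENNReal.ofReal (M^2) * ∫⁻ ζ in τ, ENNReal.ofReal (‖ψ ζ‖^2) ∂μ :=
            key τ hτmeas hτσ
        _ ≤ ENNReal.ofReal (M^2) * (c * μ τ) := by gcongr
        _ = (ENNReal.ofReal (M^2) * c) * μ τ := by ring
        _ ≤ ENNReal.ofReal ((((k:ℝ) - 2) * δ n)^2) * μ τ := by
            gcongr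
            exact ENNReal.mul_div_le
    have hcontr := (ENNReal.mul_le_mul_iff_left hμτ0 hμτtop).1 hfinal
    rw [ENNReal.ofReal_le_ofReal_iff (by positivity)] at hcontr
    have hδ2 : 0 < δ n * δ n := mul_pos (hδpos n) (hδpos n)
    nlinarith [hδ2, hk3, hcontr]
  -- cover the bad set by the S n k and conclude
  rw [ae_iff]
  refine measure_mono_null ?_
    (measure_iUnion_null fun n => measure_iUnion_null fun k => hSnull n k)
  intro ζ hζ
  simp only [Set.mem_setOf_eq, not_le] at hζ
  obtain ⟨n, hn⟩ := exists_nat_one_div_lt (sub_pos.2 hζ)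
  have h3δ : 3 * δ n = 1 / ((n:ℝ) + 1) := by
    rw [hδdef]; field_simp
  set k := ⌊‖f ζ‖ / δ n⌋₊ with hkdef
  refine Set.mem_iUnion.2 ⟨n, Set.mem_iUnion.2 ⟨k, ?_, ?_, ?_⟩⟩
  · rw [h3δ]; linarith [hn]
  · exact (le_div_iff₀ (hδpos n)).1 (Nat.floor_le (div_nonneg (norm_nonneg _) (hδpos n).le))
  · exact (div_lt_iff₀ (hδpos n)).1 (Nat.lt_floor_add_one _)
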